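/- arXiv:2511.07826 — 3 statements merged into one kernel-verified Lean document; each statement's English description precedes it below -/
import Mathlib

section
/- For finite random variables Y, X, Z forming a Markov chain Y ↔ X ↔ Z, the expected IB distortion equals the information loss: E_{X,Z}[D_KL(P_{Y|X} ‖ P_{Y|Z})] = I(X;Y) − I(Z;Y). -/
open Real Finset

/-- For finite random variables `Y, X, Z` forming a Markov chain
`Y ↔ X ↔ Z` (joint pmf `p(x,y,z) = p(x) p(y|x) p(z|x)`), the expected IB distortion
equals the information loss: `E_{X,Z}[D_KL(P_{Y|X} ‖ P_{Y|Z})] = I(X;Y) − I(Z;Y)`. -/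
theorem stmt0 {X Y Z : Type*} [Fintype X] [Fintype Y] [Fintype Z]
    (px : X → ℝ) (pyx : X → Y → ℝ) (pzx : X → Z → ℝ)
    (hpx : ∀ x, 0 < px x) (hpyx : ∀ x y, 0 < pyx x y) (hpzx : ∀ x z, 0 < pzx x z)
    (hpx1 : ∑ x, px x = 1)
    (hpyx1 : ∀ x, ∑ y, pyx x y = 1)
    (hpzx1 : ∀ x, ∑ z, pzx x z = 1) :
    -- E_{X,Z}[D_KL(P_{Y|X} ‖ P_{Y|Z})]
    (∑ x, ∑ z, (px x * pzx x z) *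
        (∑ y, pyx x y * Real.log (pyx x y /
          ((∑ x', px x' * pyx x' y * pzx x' z) / (∑ x', px x' * pzx x' z)))))
      =
    -- I(X;Y)
    (∑ x, ∑ y, px x * pyx x y * Real.log (pyx x y / (∑ x', px x' * pyx x' y)))
      -
    -- I(Z;Y)
    (∑ z, ∑ y, (∑ x', px x' * pyx x' y * pzx x' z) *
        Real.log ((∑ x', px x' * pyx x' y * pzx x' z) /
          ((∑ x', px x' * pzx x' z) * (∑ x', px x' * pyx x' y)))) := by
  have hXne : (univ : Finset X).Nonempty := by
    by_contra h
    rw [Finset.not_nonempty_iff_eq_empty] at h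
    rw [h] at hpx1
    simp at hpx1
  have hpy : ∀ y : Y, 0 < ∑ x', px x' * pyx x' y := fun y =>
    Finset.sum_pos (fun x _ => mul_pos (hpx x) (hpyx x y)) hXne
  have hpz : ∀ z : Z, 0 < ∑ x', px x' * pzx x' z := fun z =>
    Finset.sum_pos (fun x _ => mul_pos (hpx x) (hpzx x z)) hXne
  have hpyz : ∀ (y : Y) (z : Z), 0 < ∑ x', px x' * pyx x' y * pzx x' z := fun y z =>
    Finset.sum_pos (fun x _ => mul_pos (mul_pos (hpx x) (hpyx x y)) (hpzx x z)) hXne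
  have hlogL : ∀ (x : X) (z : Z) (y : Y),
      Real.log (pyx x y /
          ((∑ x', px x' * pyx x' y * pzx x' z) / (∑ x', px x' * pzx x' z)))
        = Real.log (pyx x y) - Real.log (∑ x', px x' * pyx x' y * pzx x' z)
            + Real.log (∑ x', px x' * pzx x' z) := by
    intro x z y
    rw [Real.log_div (hpyx x y).ne' (div_pos (hpyz y z) (hpz z)).ne',
      Real.log_div (hpyz y z).ne' (hpz z).ne']
    ring
  have hlog1 : ∀ (x : X) (y : Y),
      Real.log (pyx x y / (∑ x', px x' * pyx x' y))
        = Real.log (pyx x y) - Real.log (∑ x', px x' * pyx x' y) := fun x y =>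
    Real.log_div (hpyx x y).ne' (hpy y).ne'
  have hlog2 : ∀ (z : Z) (y : Y),
      Real.log ((∑ x', px x' * pyx x' y * pzx x' z) /
          ((∑ x', px x' * pzx x' z) * (∑ x', px x' * pyx x' y)))
        = Real.log (∑ x', px x' * pyx x' y * pzx x' z)
            - Real.log (∑ x', px x' * pzx x' z) - Real.log (∑ x', px x' * pyx x' y) := by
    intro z y
    rw [Real.log_div (hpyz y z).ne' (mul_pos (hpz z) (hpy y)).ne',
      Real.log_mul (hpz z).ne' (hpy y).ne']
    ring
  -- Transform LHS into a triple sum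
  have hL : (∑ x, ∑ z, (px x * pzx x z) *
        (∑ y, pyx x y * Real.log (pyx x y /
          ((∑ x', px x' * pyx x' y * pzx x' z) / (∑ x', px x' * pzx x' z)))))
      = ∑ x, ∑ z, ∑ y, (px x * pzx x z) * (pyx x y *
          (Real.log (pyx x y) - Real.log (∑ x', px x' * pyx x' y * pzx x' z)
            + Real.log (∑ x', px x' * pzx x' z))) := by
    simp only [hlogL, Finset.mul_sum]
  -- Transform I(X;Y) into a triple sum
  have hR1 : (∑ x, ∑ y, px x * pyx x y * Real.log (pyx x y / (∑ x', px x' * pyx x' y)))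
      = ∑ x, ∑ z, ∑ y, px x * pzx x z * pyx x y *
          (Real.log (pyx x y) - Real.log (∑ x', px x' * pyx x' y)) := by
    simp only [hlog1]
    refine Finset.sum_congr rfl fun x _ => ?_
    have hterm : ∀ y : Y, px x * pyx x y *
        (Real.log (pyx x y) - Real.log (∑ x', px x' * pyx x' y))
        = ∑ z, px x * pzx x z * pyx x y *
            (Real.log (pyx x y) - Real.log (∑ x', px x' * pyx x' y)) := by
      intro y
      rw [← Finset.sum_mul, ← Finset.sum_mul, ← Finset.mul_sum, hpzx1, mul_one]
    calc (∑ y, px x * pyx x y *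
          (Real.log (pyx x y) - Real.log (∑ x', px x' * pyx x' y)))
        = ∑ y, ∑ z, px x * pzx x z * pyx x y *
            (Real.log (pyx x y) - Real.log (∑ x', px x' * pyx x' y)) :=
          Finset.sum_congr rfl fun y _ => hterm y
      _ = _ := Finset.sum_comm
  -- Transform I(Z;Y) into a triple sum
  have hR2 : (∑ z, ∑ y, (∑ x', px x' * pyx x' y * pzx x' z) *
        Real.log ((∑ x', px x' * pyx x' y * pzx x' z) /
          ((∑ x', px x' * pzx x' z) * (∑ x', px x' * pyx x' y))))
      = ∑ x, ∑ z, ∑ y, px x * pyx x y * pzx x z *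
          (Real.log (∑ x', px x' * pyx x' y * pzx x' z)
            - Real.log (∑ x', px x' * pzx x' z) - Real.log (∑ x', px x' * pyx x' y)) := by
    calc (∑ z, ∑ y, (∑ x', px x' * pyx x' y * pzx x' z) *
          Real.log ((∑ x', px x' * pyx x' y * pzx x' z) /
            ((∑ x', px x' * pzx x' z) * (∑ x', px x' * pyx x' y))))
        = ∑ z, ∑ y, ∑ x, px x * pyx x y * pzx x z *
            (Real.log (∑ x', px x' * pyx x' y * pzx x' z)
              - Real.log (∑ x', px x' * pzx x' z)
              - Real.log (∑ x', px x' * pyx x' y)) := by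
          simp only [hlog2]
          simp only [Finset.sum_mul]
      _ = ∑ z, ∑ x, ∑ y, px x * pyx x y * pzx x z *
            (Real.log (∑ x', px x' * pyx x' y * pzx x' z)
              - Real.log (∑ x', px x' * pzx x' z)
              - Real.log (∑ x', px x' * pyx x' y)) :=
          Finset.sum_congr rfl fun z _ => Finset.sum_comm
      _ = _ := Finset.sum_comm
  rw [hL, hR1, hR2]
  simp only [← Finset.sum_sub_distrib]
  refine Finset.sum_congr rfl fun x _ => Finset.sum_congr rfl fun z _ =>
    Finset.sum_congr rfl fun y _ => ?_
  ring
end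

section
/- For the Markov chain Y ↔ X ↔ Z ↔ Ẑ on finite sets, the expected channel-corrupted semantic distortion is upper-bounded by the expected conditional cross entropy with any variational decoder: E_{X,Z}[E_{Ẑ|Z}[D_KL(P_{Y|X} ‖ P_{Y|Ẑ})]] ≤ E_{Ẑ}[H(P_{Y|Ẑ}, Q_{Y|Ẑ})], where H(P,Q) = −Σ_y p(y) log q(y), for any conditional pmf q(y|ẑ) with q(y|ẑ) > 0 whenever p(y|ẑ) > 0. -/
open Real Finset

/-- Conditional pmf `p(y|zh)` induced by the chain `Y ↔ X ↔ Z ↔ Zh` with joint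
`p(x,y,z,zh) = p(x) p(y|x) p(z|x) p(zh|z)`. -/
noncomputable def pYgivenZhat {X Y Z Zh : Type*} [Fintype X] [Fintype Z]
    (px : X → ℝ) (pyx : X → Y → ℝ) (pzx : X → Z → ℝ) (phz : Z → Zh → ℝ)
    (y : Y) (zh : Zh) : ℝ :=
  (∑ x, ∑ z, px x * pyx x y * pzx x z * phz z zh) /
    (∑ x, ∑ z, px x * pzx x z * phz z zh)

/-- Reordering a fourfold sum. -/
lemma sum4comm {A B C D : Type*} [Fintype A] [Fintype B] [Fintype C] [Fintype D]
    (f : A → B → C → D → ℝ) :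
    ∑ a, ∑ b, ∑ c, ∑ d, f a b c d = ∑ c, ∑ d, ∑ a, ∑ b, f a b c d := by
  have h1 : ∀ a : A, ∑ b, ∑ c, ∑ d, f a b c d = ∑ c, ∑ d, ∑ b, f a b c d := by
    intro a
    rw [Finset.sum_comm]
    exact Finset.sum_congr rfl fun c _ => Finset.sum_comm
  simp_rw [h1]
  rw [Finset.sum_comm]
  exact Finset.sum_congr rfl fun c _ => Finset.sum_comm

/-- Entropy is at most cross entropy (Gibbs' inequality). -/
lemma entropy_le_cross {Y : Type*} [Fintype Y] (p q : Y → ℝ)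
    (hp : ∀ y, 0 < p y) (hq : ∀ y, 0 < q y)
    (hp1 : ∑ y, p y = 1) (hq1 : ∑ y, q y = 1) :
    -∑ y, p y * Real.log (p y) ≤ -∑ y, p y * Real.log (q y) := by
  rw [neg_le_neg_iff]
  have h : ∑ y, p y * Real.log (q y) - ∑ y, p y * Real.log (p y) ≤ 0 := by
    rw [← Finset.sum_sub_distrib]
    have hbound : ∀ y ∈ Finset.univ, p y * Real.log (q y) - p y * Real.log (p y)
        ≤ q y - p y := by
      intro y _
      have h1 : Real.log (q y / p y) ≤ q y / p y - 1 :=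
        Real.log_le_sub_one_of_pos (div_pos (hq y) (hp y))
      have h2 : p y * Real.log (q y / p y) ≤ p y * (q y / p y - 1) :=
        mul_le_mul_of_nonneg_left h1 (hp y).le
      rw [Real.log_div (hq y).ne' (hp y).ne', mul_sub, mul_sub,
        mul_div_cancel₀ _ (hp y).ne', mul_one] at h2
      linarith
    calc ∑ y, (p y * Real.log (q y) - p y * Real.log (p y))
        ≤ ∑ y, (q y - p y) := Finset.sum_le_sum hbound
      _ = 0 := by rw [Finset.sum_sub_distrib, hp1, hq1]; ring
  linarith

/-- For the Markov chain `Y ↔ X ↔ Z ↔ Zh` on finite sets, the expected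
channel-corrupted semantic distortion is upper-bounded by the expected conditional
cross entropy with any variational decoder `q(y|zh)`:
`E_{X,Z}[E_{Zh|Z}[D_KL(P_{Y|X} ‖ P_{Y|Zh})]] ≤ E_{Zh}[H(P_{Y|Zh}, Q_{Y|Zh})]`. -/
theorem stmt1 {X Y Z Zh : Type*} [Fintype X] [Fintype Y] [Fintype Z] [Fintype Zh]
    (px : X → ℝ) (pyx : X → Y → ℝ) (pzx : X → Z → ℝ) (phz : Z → Zh → ℝ)
    (q : Zh → Y → ℝ)
    (hpx : ∀ x, 0 < px x) (hpyx : ∀ x y, 0 < pyx x y)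
    (hpzx : ∀ x z, 0 < pzx x z) (hphz : ∀ z zh, 0 < phz z zh)
    (hpx1 : ∑ x, px x = 1)
    (hpyx1 : ∀ x, ∑ y, pyx x y = 1)
    (hpzx1 : ∀ x, ∑ z, pzx x z = 1)
    (hphz1 : ∀ z, ∑ zh, phz z zh = 1)
    (hq1 : ∀ zh, ∑ y, q zh y = 1)
    -- absolute continuity: `q(y|zh) > 0` whenever `p(y|zh) > 0`
    (hq0 : ∀ zh y, 0 < pYgivenZhat px pyx pzx phz y zh → 0 < q zh y) :
    -- E_{X,Z}[E_{Zh|Z}[D_KL(P_{Y|X} ‖ P_{Y|Zh})]]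
    (∑ x, ∑ z, (px x * pzx x z) * ∑ zh, phz z zh *
        (∑ y, pyx x y * Real.log (pyx x y / pYgivenZhat px pyx pzx phz y zh)))
      ≤
    -- E_{Zh}[H(P_{Y|Zh}, Q_{Y|Zh})]
    (∑ zh, (∑ x, ∑ z, px x * pzx x z * phz z zh) *
        (-∑ y, pYgivenZhat px pyx pzx phz y zh * Real.log (q zh y))) := by
  haveI hXne : Nonempty X := by
    by_contra h
    rw [not_nonempty_iff] at h
    simp at hpx1
  haveI hZne : Nonempty Z := by
    by_contra h
    rw [not_nonempty_iff] at h
    have := hpzx1 (Classical.arbitrary X)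
    simp at this
  set pY : Y → Zh → ℝ := pYgivenZhat px pyx pzx phz with hpYdef
  set w : Zh → ℝ := fun zh => ∑ x, ∑ z, px x * pzx x z * phz z zh with hwdef
  set num : Y → Zh → ℝ := fun y zh => ∑ x, ∑ z, px x * pyx x y * pzx x z * phz z zh
    with hnumdef
  have hw : ∀ zh, 0 < w zh := by
    intro zh
    refine Finset.sum_pos (fun x _ => Finset.sum_pos (fun z _ => ?_) univ_nonempty)
      univ_nonempty
    exact mul_pos (mul_pos (hpx x) (hpzx x z)) (hphz z zh)
  have hnum : ∀ y zh, 0 < num y zh := by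
    intro y zh
    refine Finset.sum_pos (fun x _ => Finset.sum_pos (fun z _ => ?_) univ_nonempty)
      univ_nonempty
    exact mul_pos (mul_pos (mul_pos (hpx x) (hpyx x y)) (hpzx x z)) (hphz z zh)
  have hpYeq : ∀ y zh, pY y zh = num y zh / w zh := fun y zh => rfl
  have hpYpos : ∀ y zh, 0 < pY y zh := by
    intro y zh
    rw [hpYeq]
    exact div_pos (hnum y zh) (hw zh)
  have hnum_eq : ∀ y zh, num y zh = w zh * pY y zh := by
    intro y zh
    rw [hpYeq, mul_div_cancel₀ _ (hw zh).ne']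
  have hpY1 : ∀ zh, ∑ y, pY y zh = 1 := by
    intro zh
    have : ∑ y, num y zh = w zh := by
      rw [hnumdef, hwdef]
      simp only
      rw [Finset.sum_comm]
      refine Finset.sum_congr rfl fun x _ => ?_
      rw [Finset.sum_comm]
      refine Finset.sum_congr rfl fun z _ => ?_
      have : ∑ y, px x * pyx x y * pzx x z * phz z zh
          = (∑ y, pyx x y) * (px x * pzx x z * phz z zh) := by
        rw [Finset.sum_mul]
        exact Finset.sum_congr rfl fun y _ => by ring
      rw [this, hpyx1]
      ring
    simp_rw [hpYeq]
    rw [← Finset.sum_div, this, div_self (hw zh).ne']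
  have hqpos : ∀ zh y, 0 < q zh y := fun zh y => hq0 zh y (hpYpos y zh)
  -- Step A: drop the positive `log pyx` part
  have stepA : (∑ x, ∑ z, (px x * pzx x z) * ∑ zh, phz z zh *
        (∑ y, pyx x y * Real.log (pyx x y / pY y zh)))
      ≤ (∑ x, ∑ z, (px x * pzx x z) * ∑ zh, phz z zh *
        (∑ y, pyx x y * (-Real.log (pY y zh)))) := by
    refine Finset.sum_le_sum fun x _ => Finset.sum_le_sum fun z _ => ?_
    refine mul_le_mul_of_nonneg_left ?_ (mul_nonneg (hpx x).le (hpzx x z).le)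
    refine Finset.sum_le_sum fun zh _ => ?_
    refine mul_le_mul_of_nonneg_left ?_ (hphz z zh).le
    refine Finset.sum_le_sum fun y _ => ?_
    have hle1 : pyx x y ≤ 1 := by
      rw [← hpyx1 x]
      exact Finset.single_le_sum (fun y' _ => (hpyx x y').le) (Finset.mem_univ y)
    have hlog : Real.log (pyx x y) ≤ 0 := Real.log_nonpos (hpyx x y).le hle1
    rw [Real.log_div (hpyx x y).ne' (hpYpos y zh).ne']
    nlinarith [(hpyx x y).le, mul_nonneg (hpyx x y).le (neg_nonneg.mpr hlog)]
  -- Step B: reorder sums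
  have stepB : (∑ x, ∑ z, (px x * pzx x z) * ∑ zh, phz z zh *
        (∑ y, pyx x y * (-Real.log (pY y zh))))
      = ∑ zh, ∑ y, num y zh * (-Real.log (pY y zh)) := by
    have lhs_eq : (∑ x, ∑ z, (px x * pzx x z) * ∑ zh, phz z zh *
          (∑ y, pyx x y * (-Real.log (pY y zh))))
        = ∑ x, ∑ z, ∑ zh, ∑ y,
            px x * pyx x y * pzx x z * phz z zh * (-Real.log (pY y zh)) := by
      refine Finset.sum_congr rfl fun x _ => Finset.sum_congr rfl fun z _ => ?_
      rw [Finset.mul_sum]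
      refine Finset.sum_congr rfl fun zh _ => ?_
      rw [Finset.mul_sum, Finset.mul_sum]
      exact Finset.sum_congr rfl fun y _ => by ring
    rw [lhs_eq, sum4comm]
    refine Finset.sum_congr rfl fun zh _ => Finset.sum_congr rfl fun y _ => ?_
    rw [hnumdef]
    simp only
    rw [Finset.sum_mul]
    exact Finset.sum_congr rfl fun x _ => by rw [Finset.sum_mul]
  -- Step C: factor out w
  have stepC : (∑ zh, ∑ y, num y zh * (-Real.log (pY y zh)))
      = ∑ zh, w zh * (-∑ y, pY y zh * Real.log (pY y zh)) := by
    refine Finset.sum_congr rfl fun zh _ => ?_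
    rw [mul_neg, Finset.mul_sum, ← Finset.sum_neg_distrib]
    refine Finset.sum_congr rfl fun y _ => ?_
    rw [hnum_eq]
    ring
  -- Step D: Gibbs' inequality per zh
  have stepD : (∑ zh, w zh * (-∑ y, pY y zh * Real.log (pY y zh)))
      ≤ ∑ zh, w zh * (-∑ y, pY y zh * Real.log (q zh y)) := by
    refine Finset.sum_le_sum fun zh _ => ?_
    refine mul_le_mul_of_nonneg_left ?_ (hw zh).le
    exact entropy_le_cross (fun y => pY y zh) (q zh)
      (fun y => hpYpos y zh) (hqpos zh) (hpY1 zh) (hq1 zh)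
  calc (∑ x, ∑ z, (px x * pzx x z) * ∑ zh, phz z zh *
        (∑ y, pyx x y * Real.log (pyx x y / pY y zh)))
      ≤ ∑ zh, ∑ y, num y zh * (-Real.log (pY y zh)) := stepB ▸ stepA
    _ = ∑ zh, w zh * (-∑ y, pY y zh * Real.log (pY y zh)) := stepC
    _ ≤ ∑ zh, w zh * (-∑ y, pY y zh * Real.log (q zh y)) := stepD
end

section
/- For finite random variables forming the chain Y ↔ X ↔ Z ↔ Ẑ, the nonnegative constant gap identity holds: E_{X,Z,Ẑ}[D_KL(P_{Y|X}‖P_{Y|Ẑ})] = I(X;Y) − I(Ẑ;Y), and this quantity is nonnegative (data processing inequality). -/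
open Real Finset

/-- Gibbs' inequality. -/
lemma gibbs_aux {ι : Type*} [Fintype ι] (p q : ι → ℝ) (hp : ∀ i, 0 < p i)
    (hq : ∀ i, 0 < q i) (h : ∑ i, q i ≤ ∑ i, p i) :
    0 ≤ ∑ i, p i * Real.log (p i / q i) := by
  have key : ∀ i, p i - q i ≤ p i * Real.log (p i / q i) := by
    intro i
    have h1 : Real.log (q i / p i) ≤ q i / p i - 1 :=
      Real.log_le_sub_one_of_pos (div_pos (hq i) (hp i))
    have h2 : Real.log (p i / q i) = - Real.log (q i / p i) := by
      rw [← Real.log_inv]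
      congr 1
      field_simp
    have hp' := (hp i).ne'
    have h3 : p i * Real.log (q i / p i) ≤ p i * (q i / p i - 1) :=
      mul_le_mul_of_nonneg_left h1 (hp i).le
    have h4 : p i * (q i / p i - 1) = q i - p i := by field_simp
    rw [h2]
    nlinarith [h3]
  calc (0:ℝ) ≤ ∑ i, p i - ∑ i, q i := by linarith
    _ = ∑ i, (p i - q i) := (Finset.sum_sub_distrib _ _).symm
    _ ≤ ∑ i, p i * Real.log (p i / q i) := Finset.sum_le_sum fun i _ => key i

/-- Reorder `x,y,z,zh` to `x,z,zh,y`. -/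
lemma swapA_aux {X Y Z Zh : Type*} [Fintype X] [Fintype Y] [Fintype Z] [Fintype Zh]
    (f : X → Y → Z → Zh → ℝ) :
    ∑ x, ∑ y, ∑ z, ∑ zh, f x y z zh = ∑ x, ∑ z, ∑ zh, ∑ y, f x y z zh := by
  refine Finset.sum_congr rfl fun x _ => ?_
  trans ∑ z, ∑ y, ∑ zh, f x y z zh
  · exact Finset.sum_comm
  exact Finset.sum_congr rfl fun z _ => Finset.sum_comm

/-- Reorder `zh,y,x,z` to `x,z,zh,y`. -/
lemma swapB_aux {X Y Z Zh : Type*} [Fintype X] [Fintype Y] [Fintype Z] [Fintype Zh]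
    (f : X → Y → Z → Zh → ℝ) :
    ∑ zh, ∑ y, ∑ x, ∑ z, f x y z zh = ∑ x, ∑ z, ∑ zh, ∑ y, f x y z zh := by
  trans ∑ zh, ∑ x, ∑ y, ∑ z, f x y z zh
  · exact Finset.sum_congr rfl fun zh _ => Finset.sum_comm
  trans ∑ x, ∑ zh, ∑ y, ∑ z, f x y z zh
  · exact Finset.sum_comm
  refine Finset.sum_congr rfl fun x _ => ?_
  trans ∑ zh, ∑ z, ∑ y, f x y z zh
  · exact Finset.sum_congr rfl fun zh _ => Finset.sum_comm
  exact Finset.sum_comm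

/-- For finite random variables forming the chain `Y ↔ X ↔ Z ↔ Zh`
(joint pmf `p(x,y,z,zh) = p(x) p(y|x) p(z|x) p(zh|z)`), the constant gap identity
`E_{X,Z,Zh}[D_KL(P_{Y|X} ‖ P_{Y|Zh})] = I(X;Y) − I(Zh;Y)` holds, and this quantity
is nonnegative (data processing inequality). -/
theorem stmt5 {X Y Z Zh : Type*} [Fintype X] [Fintype Y] [Fintype Z] [Fintype Zh]
    (px : X → ℝ) (pyx : X → Y → ℝ) (pzx : X → Z → ℝ) (phz : Z → Zh → ℝ)
    (hpx : ∀ x, 0 < px x) (hpyx : ∀ x y, 0 < pyx x y)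
    (hpzx : ∀ x z, 0 < pzx x z) (hphz : ∀ z zh, 0 < phz z zh)
    (hpx1 : ∑ x, px x = 1)
    (hpyx1 : ∀ x, ∑ y, pyx x y = 1)
    (hpzx1 : ∀ x, ∑ z, pzx x z = 1)
    (hphz1 : ∀ z, ∑ zh, phz z zh = 1) :
    -- E_{X,Z,Zh}[D_KL(P_{Y|X} ‖ P_{Y|Zh})] = I(X;Y) − I(Zh;Y)
    ((∑ x, ∑ z, ∑ zh, (px x * pzx x z * phz z zh) *
        (∑ y, pyx x y * Real.log (pyx x y /
          ((∑ x', ∑ z', px x' * pyx x' y * pzx x' z' * phz z' zh) /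
            (∑ x', ∑ z', px x' * pzx x' z' * phz z' zh)))))
      =
    (∑ x, ∑ y, px x * pyx x y * Real.log (pyx x y / (∑ x', px x' * pyx x' y)))
      -
    (∑ zh, ∑ y, (∑ x', ∑ z', px x' * pyx x' y * pzx x' z' * phz z' zh) *
        Real.log ((∑ x', ∑ z', px x' * pyx x' y * pzx x' z' * phz z' zh) /
          ((∑ x', ∑ z', px x' * pzx x' z' * phz z' zh) * (∑ x', px x' * pyx x' y)))))
    ∧
    -- nonnegativity
    (0 ≤ ∑ x, ∑ z, ∑ zh, (px x * pzx x z * phz z zh) *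
        (∑ y, pyx x y * Real.log (pyx x y /
          ((∑ x', ∑ z', px x' * pyx x' y * pzx x' z' * phz z' zh) /
            (∑ x', ∑ z', px x' * pzx x' z' * phz z' zh))))) := by
  -- Nonemptiness of all types
  haveI hXne : Nonempty X := by
    by_contra h
    rw [not_nonempty_iff] at h
    simp only [Finset.univ_eq_empty, Finset.sum_empty] at hpx1
    exact zero_ne_one hpx1
  haveI hYne : Nonempty Y := by
    by_contra h
    rw [not_nonempty_iff] at h
    have := hpyx1 (Classical.arbitrary X)
    simp only [Finset.univ_eq_empty, Finset.sum_empty] at this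
    exact zero_ne_one this
  haveI hZne : Nonempty Z := by
    by_contra h
    rw [not_nonempty_iff] at h
    have := hpzx1 (Classical.arbitrary X)
    simp only [Finset.univ_eq_empty, Finset.sum_empty] at this
    exact zero_ne_one this
  haveI hZhne : Nonempty Zh := by
    by_contra h
    rw [not_nonempty_iff] at h
    have := hphz1 (Classical.arbitrary Z)
    simp only [Finset.univ_eq_empty, Finset.sum_empty] at this
    exact zero_ne_one this
  -- positivity facts
  have hA : ∀ y zh, 0 < ∑ x', ∑ z', px x' * pyx x' y * pzx x' z' * phz z' zh := by
    intro y zh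
    refine Finset.sum_pos (fun x _ => Finset.sum_pos (fun z _ => ?_) Finset.univ_nonempty)
      Finset.univ_nonempty
    exact mul_pos (mul_pos (mul_pos (hpx x) (hpyx x y)) (hpzx x z)) (hphz z zh)
  have hB : ∀ zh, 0 < ∑ x', ∑ z', px x' * pzx x' z' * phz z' zh := by
    intro zh
    refine Finset.sum_pos (fun x _ => Finset.sum_pos (fun z _ => ?_) Finset.univ_nonempty)
      Finset.univ_nonempty
    exact mul_pos (mul_pos (hpx x) (hpzx x z)) (hphz z zh)
  have hpY : ∀ y, 0 < ∑ x', px x' * pyx x' y := by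
    intro y
    exact Finset.sum_pos (fun x _ => mul_pos (hpx x) (hpyx x y)) Finset.univ_nonempty
  -- ∑_y A(y,zh) = B(zh)
  have hsumA : ∀ zh, ∑ y, (∑ x', ∑ z', px x' * pyx x' y * pzx x' z' * phz z' zh)
      = ∑ x', ∑ z', px x' * pzx x' z' * phz z' zh := by
    intro zh
    rw [Finset.sum_comm]
    refine Finset.sum_congr rfl fun x _ => ?_
    rw [Finset.sum_comm]
    refine Finset.sum_congr rfl fun z _ => ?_
    have : ∑ y, px x * pyx x y * pzx x z * phz z zh
        = (∑ y, pyx x y) * (px x * pzx x z * phz z zh) := by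
      rw [Finset.sum_mul]
      exact Finset.sum_congr rfl fun y _ => by ring
    rw [this, hpyx1, one_mul]
  -- E1 : LHS rewritten as quadruple sum
  have E1 : (∑ x, ∑ z, ∑ zh, (px x * pzx x z * phz z zh) *
        (∑ y, pyx x y * Real.log (pyx x y /
          ((∑ x', ∑ z', px x' * pyx x' y * pzx x' z' * phz z' zh) /
            (∑ x', ∑ z', px x' * pzx x' z' * phz z' zh)))))
      = ∑ x, ∑ z, ∑ zh, ∑ y, (px x * pyx x y * pzx x z * phz z zh) *
          (Real.log (pyx x y)
            - Real.log (∑ x', ∑ z', px x' * pyx x' y * pzx x' z' * phz z' zh)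
            + Real.log (∑ x', ∑ z', px x' * pzx x' z' * phz z' zh)) := by
    refine Finset.sum_congr rfl fun x _ => Finset.sum_congr rfl fun z _ =>
      Finset.sum_congr rfl fun zh _ => ?_
    rw [Finset.mul_sum]
    refine Finset.sum_congr rfl fun y _ => ?_
    rw [Real.log_div (hpyx x y).ne' (div_pos (hA y zh) (hB zh)).ne',
      Real.log_div (hA y zh).ne' (hB zh).ne']
    ring
  -- E2 : I(X;Y) rewritten as quadruple sum
  have E2 : (∑ x, ∑ y, px x * pyx x y * Real.log (pyx x y / (∑ x', px x' * pyx x' y)))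
      = ∑ x, ∑ z, ∑ zh, ∑ y, (px x * pyx x y * pzx x z * phz z zh) *
          (Real.log (pyx x y) - Real.log (∑ x', px x' * pyx x' y)) := by
    rw [← swapA_aux]
    refine Finset.sum_congr rfl fun x _ => Finset.sum_congr rfl fun y _ => ?_
    have hq : ∑ z, ∑ zh, pzx x z * phz z zh = 1 := by
      have : ∀ z, ∑ zh, pzx x z * phz z zh = pzx x z := by
        intro z
        rw [← Finset.mul_sum, hphz1, mul_one]
      simp only [this]
      exact hpzx1 x
    have hrw : ∑ z, ∑ zh, (px x * pyx x y * pzx x z * phz z zh) *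
          (Real.log (pyx x y) - Real.log (∑ x', px x' * pyx x' y))
        = px x * pyx x y *
            (Real.log (pyx x y) - Real.log (∑ x', px x' * pyx x' y)) *
            (∑ z, ∑ zh, pzx x z * phz z zh) := by
      rw [Finset.mul_sum]
      refine Finset.sum_congr rfl fun z _ => ?_
      rw [Finset.mul_sum]
      exact Finset.sum_congr rfl fun zh _ => by ring
    rw [hrw, hq, mul_one, Real.log_div (hpyx x y).ne' (hpY y).ne']
  -- E3 : I(Zh;Y) rewritten as quadruple sum
  have E3 : (∑ zh, ∑ y, (∑ x', ∑ z', px x' * pyx x' y * pzx x' z' * phz z' zh) *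
        Real.log ((∑ x', ∑ z', px x' * pyx x' y * pzx x' z' * phz z' zh) /
          ((∑ x', ∑ z', px x' * pzx x' z' * phz z' zh) * (∑ x', px x' * pyx x' y))))
      = ∑ x, ∑ z, ∑ zh, ∑ y, (px x * pyx x y * pzx x z * phz z zh) *
          (Real.log (∑ x', ∑ z', px x' * pyx x' y * pzx x' z' * phz z' zh)
            - Real.log (∑ x', ∑ z', px x' * pzx x' z' * phz z' zh)
            - Real.log (∑ x', px x' * pyx x' y)) := by
    rw [← swapB_aux]
    refine Finset.sum_congr rfl fun zh _ => Finset.sum_congr rfl fun y _ => ?_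
    rw [Real.log_div (hA y zh).ne' (mul_pos (hB zh) (hpY y)).ne',
      Real.log_mul (hB zh).ne' (hpY y).ne', Finset.sum_mul]
    refine Finset.sum_congr rfl fun x _ => ?_
    rw [Finset.sum_mul]
    exact Finset.sum_congr rfl fun z _ => by ring
  constructor
  · rw [E1, E2, E3]
    simp only [← Finset.sum_sub_distrib]
    refine Finset.sum_congr rfl fun x _ => Finset.sum_congr rfl fun z _ =>
      Finset.sum_congr rfl fun zh _ => Finset.sum_congr rfl fun y _ => by ring
  · refine Finset.sum_nonneg fun x _ => Finset.sum_nonneg fun z _ =>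
      Finset.sum_nonneg fun zh _ => mul_nonneg ?_ ?_
    · exact le_of_lt (mul_pos (mul_pos (hpx x) (hpzx x z)) (hphz z zh))
    · refine gibbs_aux (pyx x) (fun y =>
        (∑ x', ∑ z', px x' * pyx x' y * pzx x' z' * phz z' zh) /
          (∑ x', ∑ z', px x' * pzx x' z' * phz z' zh))
        (hpyx x) (fun y => div_pos (hA y zh) (hB zh)) ?_
      rw [← Finset.sum_div, hsumA, div_self (hB zh).ne', hpyx1]
end
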